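/- Let A be a meager subset of the unit sphere S^{n−1} ⊂ ℝⁿ. Then there exists an orthonormal basis (x₁,…,xₙ) of ℝⁿ with xᵢ ∈ S^{n−1} \ A for every i. -/

import Mathlib

open scoped RealInnerProductSpace
open Set

/-! ### Reflections across hyperplanes -/

section Aux
variable {F : Type*} [NormedAddCommGroup F] [InnerProductSpace ℝ F]

noncomputable def refl1 (v : F) : F ≃ₗᵢ[ℝ] F := Submodule.reflection (ℝ ∙ v)ᗮ

theorem refl1_apply (v x : F) : refl1 v x = x - ((2 * ⟪v, x⟫) / ‖v‖ ^ 2) • v := by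
  rw [refl1, Submodule.reflection_orthogonal_apply, Submodule.reflection_singleton_apply]
  simp only [RCLike.ofReal_real_eq_id, id_eq]
  rw [two_smul]
  module

theorem refl1_congr {v w : F} (h : (ℝ ∙ v) = ℝ ∙ w) (x : F) : refl1 v x = refl1 w x := by
  simp only [refl1, h]

theorem refl1_smul {c : ℝ} (hc : c ≠ 0) (v x : F) : refl1 (c • v) x = refl1 v x :=
  refl1_congr (Submodule.span_singleton_smul_eq (IsUnit.mk0 c hc) v) x

theorem refl1_neg (v x : F) : refl1 (-v) x = refl1 v x := by
  rw [← neg_one_smul ℝ v]; exact refl1_smul (by norm_num) v x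

@[simp] theorem refl1_refl1 (v x : F) : refl1 v (refl1 v x) = x := Submodule.reflection_reflection _ x

theorem refl1_inner_left (v x y : F) : ⟪refl1 v x, y⟫ = ⟪x, refl1 v y⟫ := by
  conv_lhs => rw [← refl1_refl1 v y]
  exact (refl1 v).inner_map_map x (refl1 v y)

/-- Reflection in the hyperplane bisecting `a,b` swaps them. -/
theorem refl1_swap {a b : F} (hab : ‖a‖ = ‖b‖) (hne : a ≠ b) : refl1 (b - a) a = b := by
  have hd : b - a ≠ 0 := sub_ne_zero.mpr (Ne.symm hne)
  have h1 : ⟪b - a, a⟫ = ⟪b, a⟫ - ‖a‖ ^ 2 := by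
    rw [inner_sub_left, real_inner_self_eq_norm_sq]
  have h2 : ‖b - a‖ ^ 2 = 2 * (‖a‖ ^ 2 - ⟪b, a⟫) := by
    rw [← real_inner_self_eq_norm_sq, inner_sub_sub_self, real_inner_self_eq_norm_sq,
      real_inner_self_eq_norm_sq, real_inner_comm, hab]
    ring
  have h3 : ‖b - a‖ ^ 2 ≠ 0 := pow_ne_zero 2 (norm_ne_zero_iff.mpr hd)
  rw [refl1_apply, h1, h2]
  have hcoef : (2 * (⟪b, a⟫ - ‖a‖ ^ 2)) / (2 * (‖a‖ ^ 2 - ⟪b, a⟫)) = -1 := by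
    have hne2 : ‖a‖ ^ 2 - ⟪b, a⟫ ≠ 0 := by
      intro h; apply h3; rw [h2, h, mul_zero]
    field_simp
    ring
  rw [hcoef]
  module

section PQ
variable {p q : F}

theorem refl1_inner_eq (hp : ‖p‖ = 1) {y : F} (hy : ‖y‖ = 1) (hyp : y ≠ p) :
    ⟪p, refl1 (y - p) q⟫ = ⟪y, q⟫ := by
  have := refl1_inner_left (y - p) p q
  rw [refl1_swap (by rw [hp, hy]) (Ne.symm hyp)] at this
  exact this.symm

theorem refl1_inv_left (hp : ‖p‖ = 1) (hpq : ⟪p, q⟫ = 0) {y : F} (hy : ‖y‖ = 1) (hyp : y ≠ p)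
    (hyq : ⟪y, q⟫ ≠ 0) :
    refl1 (refl1 (y - p) q - q) p = y := by
  have hd : y - p ≠ 0 := sub_ne_zero.mpr hyp
  have hdq : ⟪y - p, q⟫ = ⟪y, q⟫ := by rw [inner_sub_left, hpq, sub_zero]
  have hc : (2 * ⟪y - p, q⟫) / ‖y - p‖ ^ 2 ≠ 0 := by
    apply div_ne_zero
    · rw [hdq]; exact mul_ne_zero two_ne_zero hyq
    · exact pow_ne_zero 2 (norm_ne_zero_iff.mpr hd)
  have h1 : refl1 (y - p) q - q = (-((2 * ⟪y - p, q⟫) / ‖y - p‖ ^ 2)) • (y - p) := by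
    rw [refl1_apply]; module
  rw [h1, refl1_smul (neg_ne_zero.mpr hc), refl1_swap (by rw [hp, hy]) (Ne.symm hyp)]

theorem refl1_inv_right (hq : ‖q‖ = 1) (hpq : ⟪p, q⟫ = 0) {w : F} (hw : ‖w‖ = 1)
    (hwp : ⟪w, p⟫ ≠ 0) :
    refl1 (refl1 (w - q) p - p) q = w := by
  have hwq : w ≠ q := by
    intro h; apply hwp; rw [h, real_inner_comm]; exact hpq
  have hd : w - q ≠ 0 := sub_ne_zero.mpr hwq
  have hdp : ⟪w - q, p⟫ = ⟪w, p⟫ := by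
    have hqp : ⟪q, p⟫ = (0 : ℝ) := by rw [real_inner_comm]; exact hpq
    rw [inner_sub_left, hqp, sub_zero]
  have hc : (2 * ⟪w - q, p⟫) / ‖w - q‖ ^ 2 ≠ 0 := by
    apply div_ne_zero
    · rw [hdp]; exact mul_ne_zero two_ne_zero hwp
    · exact pow_ne_zero 2 (norm_ne_zero_iff.mpr hd)
  have h1 : refl1 (w - q) p - p = (-((2 * ⟪w - q, p⟫) / ‖w - q‖ ^ 2)) • (w - q) := by
    rw [refl1_apply]; module
  rw [h1, refl1_smul (neg_ne_zero.mpr hc), refl1_swap (by rw [hq, hw]) (Ne.symm hwq)]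

end PQ
end Aux

/-! ### Topological helpers -/

section Top
variable {X : Type*} [TopologicalSpace X]

theorem IsNowhereDense.isMeagre' {N : Set X} (hN : IsNowhereDense N) : IsMeagre N :=
  isMeagre_iff_countable_union_isNowhereDense.mpr
    ⟨{N}, by simpa using hN, countable_singleton N, by simp⟩

theorem isMeagre_iUnion' {ι : Sort*} [Countable ι] {s : ι → Set X}
    (h : ∀ i, IsMeagre (s i)) : IsMeagre (⋃ i, s i) := by
  rw [IsMeagre, compl_iUnion]
  exact countable_iInter_mem.mpr h

theorem IsMeagre.union' {s t : Set X} (hs : IsMeagre s) (ht : IsMeagre t) :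
    IsMeagre (s ∪ t) := by
  rw [IsMeagre, Set.compl_union]
  exact Filter.inter_mem hs ht

/-- Pulling back a nowhere dense set under a partial homeomorphism given by maps `f, g`
inverse to each other between open sets `V` and `W`. -/
theorem isNowhereDense_pullback {V W : Set X} (hV : IsOpen V) (hW : IsOpen W)
    {f g : X → X} (hf : ContinuousOn f V) (hg : ContinuousOn g W)
    (hfW : ∀ y ∈ V, f y ∈ W) (hgf : ∀ y ∈ V, g (f y) = y) (hfg : ∀ w ∈ W, f (g w) = w)
    {N : Set X} (hN : IsNowhereDense N) :
    IsNowhereDense {y | y ∈ V ∧ f y ∈ N} := by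
  set T : Set X := {y | y ∈ V ∧ f y ∈ N} with hT
  rw [IsNowhereDense, eq_empty_iff_forall_notMem]
  intro x hx
  obtain ⟨y, hyU, hyT⟩ := mem_closure_iff_nhds.mp (interior_subset hx)
    (interior (closure T)) (isOpen_interior.mem_nhds hx)
  set U' : Set X := interior (closure T) ∩ V with hU'
  have hU'open : IsOpen U' := isOpen_interior.inter hV
  have hyU' : y ∈ U' := ⟨hyU, hyT.1⟩
  set O : Set X := W ∩ g ⁻¹' U' with hO
  have hOopen : IsOpen O := hg.isOpen_inter_preimage hW hU'open
  have hOne : (f y) ∈ O := ⟨hfW y hyT.1, by rw [mem_preimage, hgf y hyT.1]; exact hyU'⟩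
  have hsub : O ⊆ closure N := by
    rintro w ⟨hwW, hwU'⟩
    have hzV : g w ∈ V := (mem_of_mem_inter_right (hwU' : g w ∈ U'))
    have hzcl : g w ∈ closure T := interior_subset (mem_of_mem_inter_left (hwU' : g w ∈ U'))
    have hca : ContinuousAt f (g w) := hf.continuousAt (hV.mem_nhds hzV)
    have hmem : f (g w) ∈ closure (f '' T) := mem_closure_image hca hzcl
    have himg : f '' T ⊆ N := by rintro _ ⟨t, ht, rfl⟩; exact ht.2
    rw [hfg w hwW] at hmem
    exact closure_mono himg hmem
  have hfin : (f y) ∈ interior (closure N) := interior_maximal hsub hOopen hOne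
  rw [hN] at hfin
  exact hfin
end Top

/-! ### The sphere in Euclidean space -/

abbrev Esp (n : ℕ) := EuclideanSpace ℝ (Fin n)
abbrev Sph (n : ℕ) := Metric.sphere (0 : Esp n) 1

noncomputable def uvec {n : ℕ} (j : Fin n) : Esp n := EuclideanSpace.single j (1 : ℝ)

theorem uvec_norm {n : ℕ} (j : Fin n) : ‖(uvec j : Esp n)‖ = 1 := by
  simp [uvec]

theorem uvec_inner {n : ℕ} (j : Fin n) (x : Esp n) : ⟪(uvec j : Esp n), x⟫ = x j := by
  simp [uvec, EuclideanSpace.inner_single_left]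

theorem inner_uvec {n : ℕ} (j : Fin n) (x : Esp n) : ⟪x, (uvec j : Esp n)⟫ = x j := by
  rw [real_inner_comm]; exact uvec_inner j x

theorem uvec_apply_ne {n : ℕ} {j k : Fin n} (h : k ≠ j) : (uvec j : Esp n) k = 0 := by
  simp [uvec, EuclideanSpace.single_apply, h]

theorem sph_norm {n : ℕ} (y : Sph n) : ‖(y : Esp n)‖ = 1 :=
  mem_sphere_zero_iff_norm.mp y.2

theorem sph_ne_uvec {n : ℕ} {j k : Fin n} (h : k ≠ j) (y : Sph n)
    (hy : (y : Esp n) k ≠ 0) : (y : Esp n) ≠ uvec j := by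
  intro heq
  apply hy
  rw [heq]
  exact uvec_apply_ne h

theorem coord_zero_nowhereDense {n : ℕ} (i : Fin n) :
    IsNowhereDense {y : Sph n | (y : Esp n) i = 0} := by
  have hcont : Continuous fun y : Sph n => (y : Esp n) i :=
    (EuclideanSpace.proj i).continuous.comp continuous_subtype_val
  have hclosed : IsClosed {y : Sph n | (y : Esp n) i = 0} :=
    isClosed_eq hcont continuous_const
  rw [hclosed.isNowhereDense_iff, eq_empty_iff_forall_notMem]
  intro x hx
  have hxi : (x : Esp n) i = 0 := by
    have := interior_subset hx
    exact this
  have hx1 : ‖(x : Esp n)‖ = 1 := sph_norm x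
  obtain ⟨ε, hε, hball⟩ := Metric.mem_nhds_iff.mp (mem_interior_iff_mem_nhds.mp hx)
  set δ : ℝ := min (ε / 3) 2⁻¹ with hδdef
  have hδpos : 0 < δ := lt_min (by linarith) (by norm_num)
  have hδle : δ ≤ 2⁻¹ := min_le_right _ _
  have hδ1 : δ ≤ 1 := hδle.trans (by norm_num)
  have hδsq : 0 ≤ 1 - δ ^ 2 := by nlinarith
  set a : ℝ := Real.sqrt (1 - δ ^ 2) with ha
  have ha2 : a ^ 2 = 1 - δ ^ 2 := Real.sq_sqrt hδsq
  have ha0 : 0 ≤ a := Real.sqrt_nonneg _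
  have ha1 : a ≤ 1 := by nlinarith
  have halow : 1 - δ ^ 2 ≤ a := by
    rw [ha]
    nlinarith [Real.sq_sqrt hδsq, Real.sqrt_nonneg (1 - δ ^ 2)]
  have hsnorm : ‖EuclideanSpace.single i (1 : ℝ)‖ = 1 := by simp
  have horth : inner ℝ (a • (x : Esp n))
      (δ • EuclideanSpace.single i (1 : ℝ)) = (0 : ℝ) := by
    rw [real_inner_smul_left, real_inner_smul_right,
      real_inner_comm, EuclideanSpace.inner_single_left]
    simp [hxi]
  set z : Esp n :=
    a • (x : Esp n) + δ • EuclideanSpace.single i (1 : ℝ) with hz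
  have hznorm : ‖z‖ = 1 := by
    have h2 : ‖z‖ ^ 2 = 1 := by
      rw [hz, norm_add_sq_real, horth]
      rw [norm_smul, norm_smul, hx1, hsnorm]
      simp only [Real.norm_eq_abs, abs_of_nonneg ha0, abs_of_nonneg hδpos.le, mul_one]
      nlinarith
    nlinarith [norm_nonneg z]
  have hzmem : z ∈ Metric.sphere (0 : Esp n) 1 := mem_sphere_zero_iff_norm.mpr hznorm
  have hzi : z i = δ := by
    rw [hz]
    simp [PiLp.add_apply, PiLp.smul_apply, EuclideanSpace.single_apply, hxi]
  have hdist : dist (⟨z, hzmem⟩ : Sph n) x < ε := by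
    rw [Subtype.dist_eq, dist_eq_norm]
    have hrw : z - (x : Esp n)
        = (a - 1) • (x : Esp n) + δ • EuclideanSpace.single i (1 : ℝ) := by
      rw [hz]; module
    rw [hrw]
    calc ‖(a - 1) • (x : Esp n) + δ • EuclideanSpace.single i (1 : ℝ)‖
        ≤ ‖(a - 1) • (x : Esp n)‖
          + ‖δ • EuclideanSpace.single i (1 : ℝ)‖ := norm_add_le _ _
      _ = |a - 1| + δ := by
          rw [norm_smul, norm_smul, hx1, hsnorm, Real.norm_eq_abs, Real.norm_eq_abs,
            abs_of_nonneg hδpos.le]; ring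
      _ = (1 - a) + δ := by rw [abs_of_nonpos (by linarith)]; ring
      _ ≤ δ ^ 2 + δ := by linarith
      _ ≤ δ + δ := by nlinarith
      _ < ε := by
          have : δ ≤ ε / 3 := min_le_left _ _
          linarith
  have hmem := hball hdist
  have hz0 : z i = 0 := hmem
  exact hδpos.ne' (hzi.symm.trans hz0)

/-! ### The partial homeomorphisms of the sphere -/

noncomputable def sphMap {n : ℕ} (c t : Esp n) (ht : ‖t‖ = 1) (y : Sph n) : Sph n :=
  ⟨refl1 ((y : Esp n) - c) t, by
    rw [mem_sphere_zero_iff_norm, LinearIsometryEquiv.norm_map, ht]⟩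

theorem sphMap_continuousOn {n : ℕ} (c t : Esp n) (ht : ‖t‖ = 1) :
    ContinuousOn (sphMap c t ht) {y : Sph n | (y : Esp n) ≠ c} := by
  rw [Topology.IsInducing.subtypeVal.continuousOn_iff]
  have hval : ∀ y : Sph n,
      (Subtype.val ∘ sphMap c t ht) y
        = t - ((2 * ⟪(y : Esp n) - c, t⟫)
            / ‖(y : Esp n) - c‖ ^ 2) • ((y : Esp n) - c) :=
    fun y => refl1_apply _ _
  have hq : Continuous fun y : Sph n => (y : Esp n) - c :=
    continuous_subtype_val.sub continuous_const
  refine ContinuousOn.congr ?_ fun y _ => hval y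
  apply ContinuousOn.sub continuousOn_const
  apply ContinuousOn.fun_smul
  · apply ContinuousOn.div
    · exact (continuous_const.mul (hq.inner continuous_const)).continuousOn
    · exact ((hq.norm).pow 2).continuousOn
    · intro y hy
      exact pow_ne_zero 2 (norm_ne_zero_iff.mpr (sub_ne_zero.mpr hy))
  · exact hq.continuousOn

noncomputable def Fmap {n : ℕ} (i0 i : Fin n) : Sph n → Sph n :=
  sphMap (uvec i0) (uvec i) (uvec_norm i)

theorem Fmap_coe {n : ℕ} (i0 i : Fin n) (y : Sph n) :
    (Fmap i0 i y : Esp n) = refl1 ((y : Esp n) - uvec i0) (uvec i) := rfl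

theorem Fmap_coord {n : ℕ} (i0 i : Fin n) (y : Sph n) (hyne : (y : Esp n) ≠ uvec i0) :
    (Fmap i0 i y : Esp n) i0 = (y : Esp n) i := by
  calc (Fmap i0 i y : Esp n) i0
      = ⟪(uvec i0 : Esp n), refl1 ((y : Esp n) - uvec i0) (uvec i)⟫ := (uvec_inner _ _).symm
    _ = ⟪(y : Esp n), (uvec i : Esp n)⟫ := refl1_inner_eq (uvec_norm i0) (sph_norm y) hyne
    _ = (y : Esp n) i := inner_uvec _ _

theorem uvec_inner_uvec {n : ℕ} {i0 i : Fin n} (h : i ≠ i0) :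
    ⟪(uvec i0 : Esp n), (uvec i : Esp n)⟫ = 0 := by
  rw [uvec_inner]
  exact uvec_apply_ne (Ne.symm h)

theorem Fmap_left_inv {n : ℕ} {i0 i : Fin n} (h : i ≠ i0) (y : Sph n)
    (hyi : (y : Esp n) i ≠ 0) : Fmap i i0 (Fmap i0 i y) = y := by
  apply Subtype.ext
  have hyp : (y : Esp n) ≠ uvec i0 := sph_ne_uvec h y hyi
  have hyq : ⟪(y : Esp n), (uvec i : Esp n)⟫ ≠ 0 := by rw [inner_uvec]; exact hyi
  show refl1 ((refl1 ((y : Esp n) - uvec i0) (uvec i)) - uvec i) (uvec i0) = (y : Esp n)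
  exact refl1_inv_left (uvec_norm i0) (uvec_inner_uvec h) (sph_norm y) hyp hyq

theorem Fmap_right_inv {n : ℕ} {i0 i : Fin n} (h : i ≠ i0) (w : Sph n)
    (hw0 : (w : Esp n) i0 ≠ 0) : Fmap i0 i (Fmap i i0 w) = w := by
  apply Subtype.ext
  have hwp : ⟪(w : Esp n), (uvec i0 : Esp n)⟫ ≠ 0 := by rw [inner_uvec]; exact hw0
  show refl1 ((refl1 ((w : Esp n) - uvec i) (uvec i0)) - uvec i0) (uvec i) = (w : Esp n)
  exact refl1_inv_right (uvec_norm i) (uvec_inner_uvec h) (sph_norm w) hwp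

/-! ### Main theorem -/

theorem exists_orthonormalBasis_avoiding_meager (n : ℕ) (hn : 2 ≤ n)
    (A : Set (EuclideanSpace ℝ (Fin n)))
    (hA : A ⊆ Metric.sphere (0 : EuclideanSpace ℝ (Fin n)) 1)
    (hmeager : IsMeagre
      (Subtype.val ⁻¹' A : Set (Metric.sphere (0 : EuclideanSpace ℝ (Fin n)) 1))) :
    ∃ b : OrthonormalBasis (Fin n) ℝ (EuclideanSpace ℝ (Fin n)),
      ∀ i, b i ∉ A := by
  classical
  have h0n : 0 < n := by omega
  let i0 : Fin n := ⟨0, h0n⟩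
  let i1 : Fin n := ⟨1, by omega⟩
  have hi10 : i1 ≠ i0 := by
    simp [i0, i1, Fin.ext_iff]
  -- the sets
  have hVopen : ∀ i : Fin n, IsOpen {y : Sph n | (y : Esp n) i ≠ 0} := by
    intro i
    have hcont : Continuous fun y : Sph n => (y : Esp n) i :=
      (EuclideanSpace.proj i).continuous.comp continuous_subtype_val
    exact (isClosed_eq hcont continuous_const).isOpen_compl
  -- decompose the meagre set
  obtain ⟨S0, hS0nd, hS0c, hS0sub⟩ := isMeagre_iff_countable_union_isNowhereDense.mp hmeager
  -- the translated bad sets are meagre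
  have hTmeagre : ∀ i : Fin n, i ≠ i0 → IsMeagre
      {y : Sph n | (y : Esp n) i ≠ 0 ∧ Fmap i0 i y ∈ (Subtype.val ⁻¹' A : Set (Sph n))} := by
    intro i hi
    have hnd : ∀ N ∈ S0, IsNowhereDense
        {y : Sph n | (y : Esp n) i ≠ 0 ∧ Fmap i0 i y ∈ N} := by
      intro N hN
      have hFcont : ContinuousOn (Fmap i0 i) {y : Sph n | (y : Esp n) i ≠ 0} := by
        apply (sphMap_continuousOn (uvec i0) (uvec i) (uvec_norm i)).mono
        intro y hy
        exact sph_ne_uvec hi y hy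
      have hGcont : ContinuousOn (Fmap i i0) {y : Sph n | (y : Esp n) i0 ≠ 0} := by
        apply (sphMap_continuousOn (uvec i) (uvec i0) (uvec_norm i0)).mono
        intro w hw
        exact sph_ne_uvec (Ne.symm hi) w hw
      have hfW : ∀ y ∈ {y : Sph n | (y : Esp n) i ≠ 0},
          Fmap i0 i y ∈ {y : Sph n | (y : Esp n) i0 ≠ 0} := by
        intro y hy
        have : (Fmap i0 i y : Esp n) i0 = (y : Esp n) i :=
          Fmap_coord i0 i y (sph_ne_uvec hi y hy)
        show (Fmap i0 i y : Esp n) i0 ≠ 0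
        rw [this]; exact hy
      exact isNowhereDense_pullback (hVopen i) (hVopen i0) hFcont hGcont hfW
        (fun y hy => Fmap_left_inv hi y hy) (fun w hw => Fmap_right_inv hi w hw)
        (hS0nd N hN)
    refine isMeagre_iff_countable_union_isNowhereDense.mpr
      ⟨(fun N => {y : Sph n | (y : Esp n) i ≠ 0 ∧ Fmap i0 i y ∈ N}) '' S0, ?_, hS0c.image _, ?_⟩
    · rintro _ ⟨N, hN, rfl⟩
      exact hnd N hN
    · rintro y ⟨hyi, hyA⟩
      obtain ⟨N, hN, hmem⟩ := hS0sub hyA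
      exact ⟨_, ⟨N, hN, rfl⟩, hyi, hmem⟩
  -- the total bad set is meagre
  have hBad : IsMeagre ((Subtype.val ⁻¹' A : Set (Sph n))
      ∪ ((⋃ i : Fin n, {y : Sph n | (y : Esp n) i = 0})
        ∪ (⋃ i : Fin n, ⋃ _ : i ≠ i0,
            {y : Sph n | (y : Esp n) i ≠ 0
              ∧ Fmap i0 i y ∈ (Subtype.val ⁻¹' A : Set (Sph n))}))) := by
    refine hmeager.union' (IsMeagre.union' ?_ ?_)
    · exact isMeagre_iUnion' fun i => (coord_zero_nowhereDense i).isMeagre'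
    · exact isMeagre_iUnion' fun i => isMeagre_iUnion' fun hi => hTmeagre i hi
  -- find a good point
  haveI : Nontrivial (Esp n) := by
    refine nontrivial_of_ne (uvec i0) 0 fun h => ?_
    have := uvec_norm (n := n) i0
    rw [h] at this
    simp at this
  haveI : Nonempty (Sph n) := (NormedSpace.sphere_nonempty.mpr zero_le_one).to_subtype
  haveI : CompleteSpace (Sph n) := Metric.isClosed_sphere.completeSpace_coe
  obtain ⟨y, hy⟩ := (dense_of_mem_residual hBad).nonempty
  rw [Set.mem_compl_iff, Set.mem_union, Set.mem_union, not_or, not_or] at hy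
  obtain ⟨hyA, hyP, hyT⟩ := hy
  have hyP' : ∀ i : Fin n, (y : Esp n) i ≠ 0 := by
    intro i hi
    exact hyP (Set.mem_iUnion.mpr ⟨i, hi⟩)
  have hyT' : ∀ i : Fin n, i ≠ i0 → Fmap i0 i y ∉ (Subtype.val ⁻¹' A : Set (Sph n)) := by
    intro i hi hmem
    exact hyT (Set.mem_iUnion.mpr ⟨i, Set.mem_iUnion.mpr ⟨hi, ⟨hyP' i, hmem⟩⟩⟩)
  have hyne : (y : Esp n) ≠ uvec i0 := sph_ne_uvec hi10 y (hyP' i1)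
  -- build the basis
  refine ⟨(EuclideanSpace.basisFun (Fin n) ℝ).map (refl1 ((y : Esp n) - uvec i0)), fun i => ?_⟩
  rw [OrthonormalBasis.map_apply, EuclideanSpace.basisFun_apply]
  by_cases hi : i = i0
  · rw [hi]
    have hswap : refl1 ((y : Esp n) - uvec i0) (uvec i0) = (y : Esp n) := by
      apply refl1_swap
      · rw [uvec_norm, sph_norm]
      · exact Ne.symm hyne
    have huv : (EuclideanSpace.single i0 (1 : ℝ) : Esp n) = uvec i0 := rfl
    rw [huv, hswap]
    exact hyA
  · have hcoe : refl1 ((y : Esp n) - uvec i0) (EuclideanSpace.single i 1)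
        = (Fmap i0 i y : Esp n) := rfl
    rw [hcoe]
    intro hmem
    exact hyT' i hi hmem
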